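/- For every disk-polygon D, the inradius of D and the circumradius of its dual D* satisfy r(D) + R(D*) = 1; moreover, the incircle of D and the circumcircle of D* can be taken concentric: there exists a point c with closedBall(c, r(D)) ⊆ D and D* ⊆ closedBall(c, R(D*)). -/

import Mathlib

open Metric Real MeasureTheory
open scoped InnerProductSpace Pointwise ENNReal

noncomputable section

/-- The Euclidean plane. -/
abbrev E2 := EuclideanSpace ℝ (Fin 2)

/-- The point of the Euclidean plane with the given coordinates. -/
def pt (a b : ℝ) : E2 := (EuclideanSpace.equiv (Fin 2) ℝ).symm ![a, b]

/-- The width of a set `C` in the direction of the unit vector `u`. -/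
def dirWidth (C : Set E2) (u : E2) : ℝ :=
  sSup {w : ℝ | ∃ x ∈ C, ∃ y ∈ C, w = ⟪x - y, u⟫_ℝ}

/-- The minimal width of a set: the infimum of the directional widths over all
unit vectors. -/
def minWidth (C : Set E2) : ℝ :=
  sInf {w : ℝ | ∃ u : E2, ‖u‖ = 1 ∧ w = dirWidth C u}

/-- The inradius of a set. -/
def inradius (C : Set E2) : ℝ :=
  sSup {r : ℝ | 0 ≤ r ∧ ∃ c : E2, closedBall c r ⊆ C}

/-- The circumradius of a set. -/
def circumradius (C : Set E2) : ℝ :=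
  sInf {r : ℝ | 0 ≤ r ∧ ∃ c : E2, C ⊆ closedBall c r}

/-- The dual disk-polygon of a set `D`. -/
def dualDP (D : Set E2) : Set E2 := {y : E2 | ∀ x ∈ D, dist x y ≤ 1}

open Filter Topology in
private lemma subA' (D : Set E2) (c : E2) (r : ℝ) (hr : 0 ≤ r) (h : closedBall c r ⊆ D)
    (y : E2) (hy : ∀ x ∈ D, dist x y ≤ 1) : dist y c ≤ 1 - r := by
  by_cases hyc : y = c
  · subst hyc
    set u : E2 := EuclideanSpace.single (0 : Fin 2) (1 : ℝ) with hu
    have hnu : ‖u‖ = 1 := by simp [hu, EuclideanSpace.norm_single]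
    have hx : y + r • u ∈ closedBall y r := by
      simp [mem_closedBall, dist_eq_norm, norm_smul, hnu, abs_of_nonneg hr]
    have h1 : dist (y + r • u) y ≤ 1 := hy _ (h hx)
    have h2 : dist (y + r • u) y = r := by
      simp [dist_eq_norm, norm_smul, hnu, abs_of_nonneg hr]
    simp [dist_self]
    linarith [h2 ▸ h1]
  · set v : E2 := c - y with hv
    set d : ℝ := ‖v‖ with hd
    have hdc : dist y c = d := by rw [dist_comm, dist_eq_norm]
    have hd0 : 0 < d := by
      rw [hd, norm_pos_iff, hv, sub_ne_zero]
      exact fun hc => hyc hc.symm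
    set x : E2 := c + (r * d⁻¹) • v with hx
    have hxc : dist x c = r := by
      rw [hx, dist_eq_norm]
      have : c + (r * d⁻¹) • v - c = (r * d⁻¹) • v := by abel
      rw [this, norm_smul, ← hd]
      rw [Real.norm_eq_abs, abs_of_nonneg (by positivity)]
      field_simp
    have hxD : x ∈ D := h (by simp [mem_closedBall, hxc])
    have h1 : dist x y ≤ 1 := hy x hxD
    have h2 : dist x y = d + r := by
      rw [dist_eq_norm]
      have : x - y = (1 + r * d⁻¹) • v := by
        rw [hx, hv]; module
      rw [this, norm_smul, ← hd, Real.norm_eq_abs, abs_of_nonneg (by positivity)]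
      field_simp
    rw [hdc]
    linarith [h2 ▸ h1]

open Filter Topology in
private lemma attain (K : Set E2) (y0 : E2) (hy0 : y0 ∈ K) (R : ℝ)
    (hR : R = sInf {r : ℝ | 0 ≤ r ∧ ∃ c : E2, K ⊆ closedBall c r})
    (hne : {r : ℝ | 0 ≤ r ∧ ∃ c : E2, K ⊆ closedBall c r}.Nonempty)
    (hR1 : R ≤ 1) :
    ∃ c0 : E2, K ⊆ closedBall c0 R := by
  have hbdd : BddBelow {r : ℝ | 0 ≤ r ∧ ∃ c : E2, K ⊆ closedBall c r} :=
    ⟨0, fun r hr => hr.1⟩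
  have hsel : ∀ n : ℕ, ∃ p : ℝ × E2, (0 ≤ p.1 ∧ K ⊆ closedBall p.2 p.1) ∧
      p.1 < R + 1 / (n + 1) := by
    intro n
    have hlt : R < R + 1 / (n + 1) := by
      have : (0:ℝ) < 1 / (n + 1) := by positivity
      linarith
    obtain ⟨r, hr, hrlt⟩ := exists_lt_of_csInf_lt hne (hR ▸ hlt)
    exact ⟨⟨r, hr.2.choose⟩, ⟨hr.1, hr.2.choose_spec⟩, hR ▸ hrlt⟩
  choose p hp hplt using hsel
  set c : ℕ → E2 := fun n => (p n).2 with hc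
  set r : ℕ → ℝ := fun n => (p n).1 with hr'
  have hcball : ∀ n, c n ∈ closedBall y0 2 := by
    intro n
    have h1 : dist y0 (c n) ≤ r n := (hp n).2 hy0
    have h2 : r n < R + 1 / (n + 1) := hplt n
    have : (1:ℝ) / (n + 1) ≤ 1 := by
      rw [div_le_one (by positivity)]; linarith [Nat.cast_nonneg (α := ℝ) n]
    simp only [mem_closedBall, dist_comm]
    linarith
  obtain ⟨c0, _, φ, hφ, hlim⟩ :=
    (isCompact_closedBall y0 2).tendsto_subseq hcball
  refine ⟨c0, fun y hy => ?_⟩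
  rw [mem_closedBall]
  have hf : Tendsto (fun k => dist y (c (φ k))) atTop (𝓝 (dist y c0)) :=
    (tendsto_const_nhds.dist hlim)
  have hg : Tendsto (fun k : ℕ => R + 1 / (k + 1 : ℝ)) atTop (𝓝 R) := by
    have := tendsto_one_div_add_atTop_nhds_zero_nat (𝕜 := ℝ)
    have h := tendsto_const_nhds (x := R) (f := atTop (α := ℕ)).add this
    simpa using h
  refine le_of_tendsto_of_tendsto' hf hg fun k => ?_
  have h1 : dist y (c (φ k)) ≤ r (φ k) := (hp (φ k)).2 hy
  have h2 : r (φ k) < R + 1 / (φ k + 1) := hplt (φ k)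
  have h3 : (1:ℝ) / (φ k + 1) ≤ 1 / (k + 1) := by
    apply one_div_le_one_div_of_le (by positivity)
    have hk : (k:ℝ) ≤ (φ k : ℝ) := by exact_mod_cast hφ.le_apply
    linarith
  linarith

/-- Sublemma 1 of the paper: for a disk-polygon `D`, the inradius of `D` and the
circumradius of its dual `D*` sum to `1`; moreover the incircle and circumcircle
can be taken concentric. -/
theorem inradius_add_circumradius_dual (S : Finset E2) (hS : S.Nonempty) (D : Set E2)
    (hD : D = ⋂ c ∈ S, closedBall c 1) (hint : (interior D).Nonempty) :
    inradius D + circumradius (dualDP D) = 1 ∧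
    ∃ c : E2, closedBall c (inradius D) ⊆ D ∧
      dualDP D ⊆ closedBall c (circumradius (dualDP D)) := by
  obtain ⟨p, hp⟩ := hint
  have hpD : p ∈ D := interior_subset hp
  have hSd : ∀ s ∈ S, s ∈ dualDP D := by
    intro s hs x hx
    rw [hD] at hx
    have := Set.mem_iInter₂.mp hx s hs
    rw [mem_closedBall] at this
    exact this
  obtain ⟨s0, hs0⟩ := hS
  have hs0d : s0 ∈ dualDP D := hSd s0 hs0
  have hsubA : ∀ (c : E2) (r : ℝ), 0 ≤ r → closedBall c r ⊆ D →
      dualDP D ⊆ closedBall c (1 - r) := fun c r hr h y hy =>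
    mem_closedBall.mpr (subA' D c r hr h y hy)
  have h1mem : (1:ℝ) ∈ {r : ℝ | 0 ≤ r ∧ ∃ c : E2, dualDP D ⊆ closedBall c r} :=
    ⟨zero_le_one, p, by simpa using hsubA p 0 le_rfl (by simp [hpD])⟩
  have hRne : {r : ℝ | 0 ≤ r ∧ ∃ c : E2, dualDP D ⊆ closedBall c r}.Nonempty := ⟨1, h1mem⟩
  have hbddR : BddBelow {r : ℝ | 0 ≤ r ∧ ∃ c : E2, dualDP D ⊆ closedBall c r} :=
    ⟨0, fun r hr => hr.1⟩
  set R := circumradius (dualDP D) with hRdef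
  have hR0 : 0 ≤ R := le_csInf hRne fun r hr => hr.1
  have hR1 : R ≤ 1 := csInf_le hbddR h1mem
  obtain ⟨c0, hc0⟩ := attain (dualDP D) s0 hs0d R hRdef hRne hR1
  have hin : closedBall c0 (1 - R) ⊆ D := by
    intro x hx
    rw [hD]
    refine Set.mem_iInter₂.mpr fun s hs => ?_
    rw [mem_closedBall]
    have h1 : dist x c0 ≤ 1 - R := mem_closedBall.mp hx
    have h2 : dist s c0 ≤ R := mem_closedBall.mp (hc0 (hSd s hs))
    calc dist x s ≤ dist x c0 + dist c0 s := dist_triangle x c0 s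
      _ ≤ (1 - R) + R := add_le_add h1 (by rw [dist_comm]; exact h2)
      _ = 1 := by ring
  have hinmem : (1 - R) ∈ {r : ℝ | 0 ≤ r ∧ ∃ c : E2, closedBall c r ⊆ D} :=
    ⟨by linarith, c0, hin⟩
  have hub : ∀ r ∈ {r : ℝ | 0 ≤ r ∧ ∃ c : E2, closedBall c r ⊆ D}, r ≤ 1 - R := by
    intro r hr
    obtain ⟨hr0, c, hc⟩ := hr
    have hd : dualDP D ⊆ closedBall c (1 - r) := hsubA c r hr0 hc
    have h1r : 0 ≤ 1 - r := le_trans dist_nonneg (mem_closedBall.mp (hd hs0d))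
    have hle : R ≤ 1 - r := csInf_le hbddR ⟨h1r, c, hd⟩
    linarith
  have hieq : inradius D = 1 - R :=
    le_antisymm (csSup_le ⟨1 - R, hinmem⟩ hub) (le_csSup ⟨1 - R, hub⟩ hinmem)
  refine ⟨by rw [hieq]; ring, c0, ?_, hc0⟩
  rw [hieq]; exact hin
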